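/- arXiv:1609.04490 — 2 statements merged into one kernel-verified Lean document; each statement's English description precedes it below -/
import Mathlib

section
/- Let i_0 be the smallest index with a_{i_0} ≠ 0 in f(u) = Σ_{i=i_0}^p a_i u^i (a_p = 1, f ≡ u^p mod p), and suppose there exists n ≥ 1 with f^{(i)}(π) ≠ 0 for 0 ≤ i ≤ n-1 and f^{(n)}(π) = 0, where f^{(m)} denotes the m-fold composite of f and π is a uniformizer of K. Then for all 0 ≤ j ≤ n-1 one has v_p(f^{(j)}(π)) ≥ (1/e)·Σ_{k=0}^{j} i_0^k, and consequently (1/e)·Σ_{k=0}^{n-1} i_0^k ≤ v_p(a_{i_0}). -/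
section Aux

variable {K : Type*} [Field K] (v : K → ℝ)
  (hmul : ∀ x y : K, x ≠ 0 → y ≠ 0 → v (x * y) = v x + v y)
  (hadd : ∀ x y : K, x ≠ 0 → y ≠ 0 → x + y ≠ 0 → min (v x) (v y) ≤ v (x + y))

include hmul in
lemma v_one_aux : v (1 : K) = 0 := by
  have := hmul 1 1 one_ne_zero one_ne_zero
  rw [mul_one] at this; linarith

include hmul in
lemma v_pow_aux (x : K) (hx : x ≠ 0) : ∀ k : ℕ, v (x ^ k) = k * v x := by
  intro k
  induction k with
  | zero => simp [v_one_aux v hmul]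
  | succ k ih =>
    rw [pow_succ, hmul _ _ (pow_ne_zero _ hx) hx, ih]
    push_cast; ring

include hmul in
lemma v_neg_aux (x : K) (hx : x ≠ 0) : v (-x) = v x := by
  have h1 : v ((-1 : K)) = 0 := by
    have := hmul (-1) (-1) (neg_ne_zero.mpr one_ne_zero) (neg_ne_zero.mpr one_ne_zero)
    rw [neg_mul_neg, one_mul, v_one_aux v hmul] at this; linarith
  have : v ((-1 : K) * x) = v (-1 : K) + v x :=
    hmul _ _ (neg_ne_zero.mpr one_ne_zero) hx
  rw [neg_one_mul] at this
  rw [this, h1, zero_add]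

include hadd in
lemma v_sum_ge_aux (B : ℝ) (s : Finset ℕ) (g : ℕ → K)
    (h : ∀ i ∈ s, g i = 0 ∨ B ≤ v (g i)) (hs : ∑ i ∈ s, g i ≠ 0) :
    B ≤ v (∑ i ∈ s, g i) := by
  classical
  induction s using Finset.induction_on with
  | empty => simp at hs
  | @insert a s ha ih =>
    rw [Finset.sum_insert ha] at hs ⊢
    by_cases hga : g a = 0
    · rw [hga, zero_add] at hs ⊢
      exact ih (fun i hi => h i (Finset.mem_insert_of_mem hi)) hs
    · have hB : B ≤ v (g a) :=
        (h a (Finset.mem_insert_self a s)).resolve_left hga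
      by_cases hss : ∑ i ∈ s, g i = 0
      · rw [hss, add_zero]; exact hB
      · have hB2 : B ≤ v (∑ i ∈ s, g i) :=
          ih (fun i hi => h i (Finset.mem_insert_of_mem hi)) hss
        exact le_trans (le_min hB hB2) (hadd _ _ hga hss hs)

end Aux

/-- Let `i₀` be the smallest index with `a_{i₀} ≠ 0` in `f(u) = Σ_{i=i₀}^p a_i u^i`
(`a_p = 1`, `f ≡ u^p mod p`, `f ≠ u^p` so `i₀ < p`), and suppose there exists `n ≥ 1`
with `f^{(i)}(π) ≠ 0` for `0 ≤ i ≤ n-1` and `f^{(n)}(π) = 0`, where `f^{(m)}` is the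
`m`-fold composite of `f` and `π` is a uniformizer of `K` (so `v π = 1/e`).  Then for all
`0 ≤ j ≤ n-1` one has `v (f^{(j)}(π)) ≥ (1/e)·Σ_{k=0}^{j} i₀^k`, and consequently
`(1/e)·Σ_{k=0}^{n-1} i₀^k ≤ v (a i₀)`. -/
theorem valuation_growth_of_f_iterates
    (p : ℕ) (hp : p.Prime)
    (K : Type*) [Field K]
    (v : K → ℝ)
    (hmul : ∀ x y : K, x ≠ 0 → y ≠ 0 → v (x * y) = v x + v y)
    (hadd : ∀ x y : K, x ≠ 0 → y ≠ 0 → x + y ≠ 0 → min (v x) (v y) ≤ v (x + y))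
    (hpK : (p : K) ≠ 0)
    (hvp : v (p : K) = 1)
    (e : ℕ) (he : 1 ≤ e)
    (a : ℕ → K) (hap : a p = 1)
    (haint : ∀ i, i < p → a i = 0 ∨ 1 ≤ v (a i))
    (i₀ : ℕ) (hi₀l : 1 ≤ i₀) (hi₀u : i₀ < p)
    (hlow : ∀ i, i < i₀ → a i = 0)
    (hi₀ne : a i₀ ≠ 0)
    (π : K) (hπne : π ≠ 0) (hvπ : v π = 1 / (e : ℝ))
    (n : ℕ) (hn : 1 ≤ n)
    (hnonzero : ∀ i, i < n → (fun x : K => ∑ j ∈ Finset.range (p + 1), a j * x ^ j)^[i] π ≠ 0)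
    (hzero : (fun x : K => ∑ j ∈ Finset.range (p + 1), a j * x ^ j)^[n] π = 0) :
    (∀ j, j ≤ n - 1 →
        (1 / (e : ℝ)) * (∑ k ∈ Finset.range (j + 1), (i₀ : ℝ) ^ k) ≤
          v ((fun x : K => ∑ j ∈ Finset.range (p + 1), a j * x ^ j)^[j] π)) ∧
    (1 / (e : ℝ)) * (∑ k ∈ Finset.range n, (i₀ : ℝ) ^ k) ≤ v (a i₀) := by
  classical
  set F : K → K := fun x : K => ∑ j ∈ Finset.range (p + 1), a j * x ^ j with hF
  set S : ℕ → ℝ := fun j => (1 / (e : ℝ)) * (∑ k ∈ Finset.range (j + 1), (i₀ : ℝ) ^ k)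
    with hS
  have hepos : (0 : ℝ) < (e : ℝ) := by exact_mod_cast he
  have heinv : (0 : ℝ) < 1 / (e : ℝ) := by positivity
  have heinv1 : 1 / (e : ℝ) ≤ 1 := by
    rw [div_le_one hepos]; exact_mod_cast he
  have hi₀R : (1 : ℝ) ≤ (i₀ : ℝ) := by exact_mod_cast hi₀l
  have hSrec : ∀ j, S (j + 1) = 1 / (e : ℝ) + (i₀ : ℝ) * S j := by
    intro j
    have h : (∑ k ∈ Finset.range (j + 1 + 1), (i₀ : ℝ) ^ k) =
        (i₀ : ℝ) * (∑ k ∈ Finset.range (j + 1), (i₀ : ℝ) ^ k) + 1 := by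
      rw [Finset.sum_range_succ' (fun k => (i₀ : ℝ) ^ k) (j + 1), Finset.mul_sum]
      simp [pow_succ, mul_comm]
    simp only [hS]
    rw [h]
    ring
  have hSge : ∀ j, 1 / (e : ℝ) ≤ S j := by
    intro j
    have h1 : (1 : ℝ) ≤ ∑ k ∈ Finset.range (j + 1), (i₀ : ℝ) ^ k := by
      have := Finset.single_le_sum (f := fun k => (i₀ : ℝ) ^ k)
        (fun k _ => by positivity) (Finset.mem_range.mpr (Nat.succ_pos j))
      simpa using this
    calc 1 / (e : ℝ) = 1 / (e : ℝ) * 1 := by ring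
    _ ≤ S j := by exact mul_le_mul_of_nonneg_left h1 (le_of_lt heinv)
  have hSpos : ∀ j, (0 : ℝ) < S j := fun j => lt_of_lt_of_le heinv (hSge j)
  -- Key induction
  have key : ∀ j, j ≤ n - 1 → S j ≤ v (F^[j] π) := by
    intro j
    induction j with
    | zero =>
      intro _
      simp only [Function.iterate_zero_apply, hvπ, hS, zero_add, Finset.range_one,
        Finset.sum_singleton, pow_zero, mul_one]
      exact le_refl _
    | succ j ih =>
      intro hj
      have hj' : j ≤ n - 1 := le_trans (Nat.le_succ j) hj
      have hcj := ih hj'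
      have hxne : F^[j] π ≠ 0 := hnonzero j (by omega)
      have hFxne : F^[j + 1] π ≠ 0 := hnonzero (j + 1) (by omega)
      rw [Function.iterate_succ_apply'] at hFxne ⊢
      set x := F^[j] π with hx
      have hcge : 1 / (e : ℝ) ≤ v x := le_trans (hSge j) hcj
      have hc0 : (0 : ℝ) ≤ v x := le_trans (le_of_lt heinv) hcge
      have hFx : F x = ∑ k ∈ Finset.range (p + 1), a k * x ^ k := rfl
      rw [hFx]
      rw [hFx] at hFxne
      refine v_sum_ge_aux v hadd _ _ _ ?_ hFxne
      intro k hk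
      rw [Finset.mem_range] at hk
      by_cases hklt : k < i₀
      · left; rw [hlow k hklt, zero_mul]
      · push_neg at hklt
        by_cases hkp : k = p
        · right
          subst hkp
          rw [hap, one_mul, v_pow_aux v hmul x hxne]
          have hpk : (i₀ : ℝ) + 1 ≤ (k : ℝ) := by exact_mod_cast hi₀u
          rw [hSrec]
          nlinarith [mul_le_mul_of_nonneg_left hcj (by positivity : (0:ℝ) ≤ (i₀:ℝ)),
            mul_le_mul_of_nonneg_right hpk hc0]
        · have hkplt : k < p := lt_of_le_of_ne (by omega) hkp
          by_cases hak : a k = 0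
          · left; rw [hak, zero_mul]
          · right
            have hvk : 1 ≤ v (a k) := (haint k hkplt).resolve_left hak
            rw [hmul _ _ hak (pow_ne_zero _ hxne), v_pow_aux v hmul x hxne]
            have hkk : (i₀ : ℝ) ≤ (k : ℝ) := by exact_mod_cast hklt
            rw [hSrec]
            nlinarith [mul_le_mul_of_nonneg_left hcj (by positivity : (0:ℝ) ≤ (i₀:ℝ)),
              mul_le_mul_of_nonneg_right hkk hc0]
  constructor
  · exact key
  · -- final claim
    obtain ⟨m, rfl⟩ : ∃ m, n = m + 1 := ⟨n - 1, by omega⟩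
    have hmle : m ≤ m + 1 - 1 := by omega
    set y := F^[m] π with hy
    have hyne : y ≠ 0 := hnonzero m (by omega)
    have hcy : S m ≤ v y := key m hmle
    have hT0 : (0 : ℝ) ≤ S m := le_of_lt (hSpos m)
    have hvy0 : (0 : ℝ) ≤ v y := le_trans hT0 hcy
    rw [Function.iterate_succ_apply'] at hzero
    have hFy : (∑ k ∈ Finset.range (p + 1), a k * y ^ k) = 0 := hzero
    have hi₀mem : i₀ ∈ Finset.range (p + 1) := Finset.mem_range.mpr (by omega)
    have hsplit := Finset.add_sum_erase (Finset.range (p + 1))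
      (fun k => a k * y ^ k) hi₀mem
    have heq : a i₀ * y ^ i₀ =
        -(∑ k ∈ (Finset.range (p + 1)).erase i₀, a k * y ^ k) := by
      have h0 : a i₀ * y ^ i₀ + ∑ k ∈ (Finset.range (p + 1)).erase i₀, a k * y ^ k = 0 := by
        rw [hsplit]; exact hFy
      exact eq_neg_of_add_eq_zero_left h0
    have hgne : a i₀ * y ^ i₀ ≠ 0 := mul_ne_zero hi₀ne (pow_ne_zero _ hyne)
    have hsumne : (∑ k ∈ (Finset.range (p + 1)).erase i₀, a k * y ^ k) ≠ 0 := by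
      intro h
      rw [h, neg_zero] at heq
      exact hgne heq
    have hbound : S m + (i₀ : ℝ) * v y ≤
        v (∑ k ∈ (Finset.range (p + 1)).erase i₀, a k * y ^ k) := by
      refine v_sum_ge_aux v hadd _ _ _ ?_ hsumne
      intro k hk
      obtain ⟨hk1, hk2⟩ := Finset.mem_erase.mp hk
      rw [Finset.mem_range] at hk2
      by_cases hklt : k < i₀
      · left; rw [hlow k hklt, zero_mul]
      · push_neg at hklt
        have hki : i₀ < k := lt_of_le_of_ne hklt (Ne.symm hk1)
        by_cases hkp : k = p
        · right
          subst hkp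
          rw [hap, one_mul, v_pow_aux v hmul y hyne]
          have hpk : (i₀ : ℝ) + 1 ≤ (k : ℝ) := by exact_mod_cast hi₀u
          nlinarith [mul_le_mul_of_nonneg_right hpk hvy0]
        · have hkplt : k < p := lt_of_le_of_ne (by omega) hkp
          by_cases hak : a k = 0
          · left; rw [hak, zero_mul]
          · right
            have hvk : 1 ≤ v (a k) := (haint k hkplt).resolve_left hak
            rw [hmul _ _ hak (pow_ne_zero _ hyne), v_pow_aux v hmul y hyne]
            have hkk : (i₀ : ℝ) + 1 ≤ (k : ℝ) := by exact_mod_cast hki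
            nlinarith [mul_le_mul_of_nonneg_right hkk hvy0]
    have hv1 : v (a i₀ * y ^ i₀) = v (a i₀) + (i₀ : ℝ) * v y := by
      rw [hmul _ _ hi₀ne (pow_ne_zero _ hyne), v_pow_aux v hmul y hyne]
    have hv2 : v (a i₀ * y ^ i₀) =
        v (∑ k ∈ (Finset.range (p + 1)).erase i₀, a k * y ^ k) := by
      rw [heq, v_neg_aux v hmul _ hsumne]
    show S m ≤ v (a i₀)
    linarith [hbound, hv1.symm.trans hv2]
end

section
/- Define n_0 = e·v_p(a_1) if i_0 = 1, and n_0 = max{n ∈ Z : i_0^n ≤ e(i_0 - 1)v_p(a_{i_0}) + 1} if i_0 ≠ 1, where i_0 is the least index with a_{i_0} ≠ 0. Then: f^{(n)}(π) ≠ 0 for all n ≥ 1 if and only if f^{(n)}(π) ≠ 0 for all 1 ≤ n ≤ n_0. -/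
lemma val_sum_ge {K : Type*} [Field K] (v : K → ℝ)
    (hadd : ∀ x y : K, x ≠ 0 → y ≠ 0 → x + y ≠ 0 → min (v x) (v y) ≤ v (x + y))
    (s : Finset ℕ) (g : ℕ → K) (c : ℝ)
    (h : ∀ j ∈ s, g j = 0 ∨ c ≤ v (g j)) (hne : ∑ j ∈ s, g j ≠ 0) :
    c ≤ v (∑ j ∈ s, g j) := by
  classical
  induction s using Finset.induction_on with
  | empty => simp at hne
  | @insert x s hxs ih =>
    rw [Finset.sum_insert hxs] at hne ⊢
    by_cases hgx : g x = 0
    · rw [hgx, zero_add] at hne ⊢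
      exact ih (fun j hj => h j (Finset.mem_insert_of_mem hj)) hne
    · have hc : c ≤ v (g x) := (h x (Finset.mem_insert_self x s)).resolve_left hgx
      by_cases hs : ∑ j ∈ s, g j = 0
      · rw [hs, add_zero]; exact hc
      · exact le_trans
          (le_min hc (ih (fun j hj => h j (Finset.mem_insert_of_mem hj)) hs))
          (hadd (g x) (∑ j ∈ s, g j) hgx hs hne)



set_option maxHeartbeats 1600000 in
/-- Define `n₀ = e·v_p(a_1)` if `i₀ = 1`, and `n₀ = max{n ∈ ℤ : i₀^n ≤ e(i₀-1)v_p(a_{i₀}) + 1}`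
if `i₀ ≠ 1`, where `i₀` is the least index with `a_{i₀} ≠ 0`.  Then `f^{(n)}(π) ≠ 0` for
all `n ≥ 1` iff `f^{(n)}(π) ≠ 0` for all `1 ≤ n ≤ n₀`.  (The condition `n ≤ n₀` is encoded
directly: `(n : ℝ) ≤ e·v(a 1)` when `i₀ = 1`, and `i₀^n ≤ e(i₀-1)v(a i₀) + 1` when
`i₀ ≠ 1`; since `i₀ ≥ 2` in the latter case this is equivalent to `n ≤ n₀`.) -/
theorem nonvanishing_of_iterates_iff_up_to_n0
    (p : ℕ) (hp : p.Prime)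
    (K : Type*) [Field K]
    (v : K → ℝ)
    (hmul : ∀ x y : K, x ≠ 0 → y ≠ 0 → v (x * y) = v x + v y)
    (hadd : ∀ x y : K, x ≠ 0 → y ≠ 0 → x + y ≠ 0 → min (v x) (v y) ≤ v (x + y))
    (hpK : (p : K) ≠ 0)
    (hvp : v (p : K) = 1)
    (e : ℕ) (he : 1 ≤ e)
    (a : ℕ → K) (hap : a p = 1)
    (haint : ∀ i, i < p → a i = 0 ∨ 1 ≤ v (a i))
    (i₀ : ℕ) (hi₀l : 1 ≤ i₀) (hi₀u : i₀ < p)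
    (hlow : ∀ i, i < i₀ → a i = 0)
    (hi₀ne : a i₀ ≠ 0)
    (π : K) (hπne : π ≠ 0) (hvπ : v π = 1 / (e : ℝ)) :
    (∀ n : ℕ, 1 ≤ n →
        (fun x : K => ∑ j ∈ Finset.range (p + 1), a j * x ^ j)^[n] π ≠ 0) ↔
      (∀ n : ℕ, 1 ≤ n →
        (if i₀ = 1 then (n : ℝ) ≤ (e : ℝ) * v (a 1)
          else (i₀ : ℝ) ^ n ≤ (e : ℝ) * ((i₀ : ℝ) - 1) * v (a i₀) + 1) →
        (fun x : K => ∑ j ∈ Finset.range (p + 1), a j * x ^ j)^[n] π ≠ 0) := by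
  classical
  set f : K → K := fun x : K => ∑ j ∈ Finset.range (p + 1), a j * x ^ j with hf
  have he1 : (1:ℝ) ≤ (e:ℝ) := by exact_mod_cast he
  have hepos : (0:ℝ) < (e:ℝ) := by linarith
  have v1 : v (1:K) = 0 := by
    have := hmul 1 1 one_ne_zero one_ne_zero
    simp at this; linarith
  have vneg : ∀ x : K, x ≠ 0 → v (-x) = v x := by
    intro x hx
    have hm1 : v (-1 : K) = 0 := by
      have := hmul (-1) (-1) (by norm_num) (by norm_num)
      simp [v1] at this; linarith
    have := hmul (-1) x (by norm_num) hx
    simpa [hm1] using this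
  have vpow : ∀ (x : K), x ≠ 0 → ∀ j : ℕ, v (x ^ j) = j * v x := by
    intro x hx j
    induction j with
    | zero => simp [v1]
    | succ j ih =>
      rw [pow_succ, hmul _ _ (pow_ne_zero j hx) hx, ih]
      push_cast; ring
  have a0 : a 0 = 0 := hlow 0 hi₀l
  have f0 : f 0 = 0 := by
    show ∑ j ∈ Finset.range (p + 1), a j * (0:K) ^ j = 0
    rw [Finset.sum_eq_single 0]
    · simp [a0]
    · intro j _ hj0; simp [zero_pow hj0]
    · simp
  -- step estimate
  have step : ∀ x : K, x ≠ 0 → ∀ s : ℝ, 1/(e:ℝ) ≤ s → s ≤ v x → f x ≠ 0 →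
      (i₀:ℝ) * s + 1/(e:ℝ) ≤ v (f x) := by
    intro x hx s hs hsv hfx
    have hs0 : 0 < s := lt_of_lt_of_le (by positivity) hs
    have hse : 1/(e:ℝ) ≤ 1 := by
      rw [div_le_one hepos]; exact he1
    refine val_sum_ge v hadd _ _ _ ?_ hfx
    intro j hj
    rcases lt_or_ge j i₀ with hji | hji
    · left; simp [hlow j hji]
    by_cases hjp : j = p
    · right
      rw [hjp, hap, one_mul, vpow x hx]
      have h1 : (i₀:ℝ) + 1 ≤ (p:ℝ) := by exact_mod_cast hi₀u
      have h2 : ((i₀:ℝ) + 1) * s ≤ (p:ℝ) * s := by nlinarith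
      have h3 : (p:ℝ) * s ≤ (p:ℝ) * v x := by
        have : (0:ℝ) ≤ (p:ℝ) := by positivity
        nlinarith
      nlinarith
    · have hjlt : j < p := by
        have : j < p + 1 := Finset.mem_range.mp hj
        omega
      by_cases haj : a j = 0
      · left; simp [haj]
      · right
        have h1 : 1 ≤ v (a j) := (haint j hjlt).resolve_left haj
        rw [hmul _ _ haj (pow_ne_zero j hx), vpow x hx]
        have hjge : (i₀:ℝ) ≤ (j:ℝ) := by exact_mod_cast hji
        have hj0 : (0:ℝ) ≤ (j:ℝ) := by positivity
        nlinarith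
  -- root bound
  have root : ∀ x : K, x ≠ 0 → 0 ≤ v x → f x = 0 → v x ≤ v (a i₀) := by
    intro x hx hvx hfx
    have hmem : i₀ ∈ Finset.range (p + 1) := by
      simp only [Finset.mem_range]; omega
    replace hfx : ∑ j ∈ Finset.range (p + 1), a j * x ^ j = 0 := hfx
    rw [← Finset.add_sum_erase _ _ hmem] at hfx
    set T : K := ∑ j ∈ (Finset.range (p + 1)).erase i₀, a j * x ^ j with hT
    have hterm : a i₀ * x ^ i₀ ≠ 0 := mul_ne_zero hi₀ne (pow_ne_zero _ hx)
    have hTe : T = -(a i₀ * x ^ i₀) := by linear_combination hfx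
    have hTne : T ≠ 0 := by rw [hTe]; exact neg_ne_zero.mpr hterm
    have hvT : v T = v (a i₀) + (i₀:ℝ) * v x := by
      rw [hTe, vneg _ hterm, hmul _ _ hi₀ne (pow_ne_zero _ hx), vpow x hx]
    have hge : ((i₀:ℝ) + 1) * v x ≤ v T := by
      refine val_sum_ge v hadd _ _ _ ?_ hTne
      intro j hj
      obtain ⟨hjne, hjr⟩ := Finset.mem_erase.mp hj
      rcases lt_or_ge j i₀ with hji | hji
      · left; simp [hlow j hji]
      have hji' : i₀ + 1 ≤ j := by omega
      by_cases hjp : j = p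
      · right
        rw [hjp, hap, one_mul, vpow x hx]
        have h1 : (i₀:ℝ) + 1 ≤ (p:ℝ) := by exact_mod_cast hi₀u
        nlinarith
      · have hjlt : j < p := by
          have : j < p + 1 := Finset.mem_range.mp hjr
          omega
        by_cases haj : a j = 0
        · left; simp [haj]
        · right
          have h1 : 1 ≤ v (a j) := (haint j hjlt).resolve_left haj
          rw [hmul _ _ haj (pow_ne_zero j hx), vpow x hx]
          have hjge : (i₀:ℝ) + 1 ≤ (j:ℝ) := by exact_mod_cast hji'
          nlinarith
    rw [hvT] at hge
    linarith
  -- nonvanishing propagates backwards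
  have back : ∀ k : ℕ, f^[k + 1] π ≠ 0 → f^[k] π ≠ 0 := by
    intro k h hk
    apply h
    rw [Function.iterate_succ_apply', hk, f0]
  -- growth estimate
  have growth : ∀ k : ℕ, f^[k] π ≠ 0 →
      (∑ j ∈ Finset.range (k + 1), (i₀:ℝ) ^ j) / (e:ℝ) ≤ v (f^[k] π) := by
    intro k
    induction k with
    | zero => intro _; simp [hvπ]
    | succ k ih =>
      intro hk1
      have hk0 : f^[k] π ≠ 0 := back k hk1
      rw [Function.iterate_succ_apply'] at hk1 ⊢
      set S : ℝ := ∑ j ∈ Finset.range (k + 1), (i₀:ℝ) ^ j with hS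
      have hS1 : 1 ≤ S := by
        rw [hS]
        calc (1:ℝ) = (i₀:ℝ) ^ 0 := by norm_num
        _ ≤ ∑ j ∈ Finset.range (k + 1), (i₀:ℝ) ^ j := by
            apply Finset.single_le_sum (f := fun j => (i₀:ℝ) ^ j)
            · intro j _; positivity
            · simp
      have h1 : 1/(e:ℝ) ≤ S/(e:ℝ) := by gcongr
      have h2 := step (f^[k] π) hk0 (S/(e:ℝ)) h1 (ih hk0) hk1
      have h3 : ∑ j ∈ Finset.range (k + 1 + 1), (i₀:ℝ) ^ j
          = (i₀:ℝ) * S + 1 := by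
        rw [Finset.sum_range_succ', hS, Finset.mul_sum]
        simp [pow_succ, mul_comm]
      rw [h3]
      have : ((i₀:ℝ) * S + 1) / (e:ℝ) = (i₀:ℝ) * (S/(e:ℝ)) + 1/(e:ℝ) := by
        field_simp
      rw [this]
      exact h2
  -- main argument
  constructor
  · intro h n hn _
    exact h n hn
  · intro h
    by_contra hcon
    push_neg at hcon
    obtain ⟨n, hn1, hn0⟩ := hcon
    have hex : ∃ m, 1 ≤ m ∧ f^[m] π = 0 := ⟨n, hn1, hn0⟩
    obtain ⟨m, ⟨hm1, hm0⟩, hmin⟩ :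
        ∃ m, (1 ≤ m ∧ f^[m] π = 0) ∧ ∀ k < m, ¬(1 ≤ k ∧ f^[k] π = 0) :=
      ⟨Nat.find hex, Nat.find_spec hex, fun k hk => Nat.find_min hex hk⟩
    have hxne : f^[m - 1] π ≠ 0 := by
      by_cases hm2 : m = 1
      · rw [hm2]; simpa using hπne
      · intro h0
        exact hmin (m - 1) (by omega) ⟨by omega, h0⟩
    have hgr := growth (m - 1) hxne
    have hfx : f (f^[m - 1] π) = 0 := by
      have h' : f^[m - 1 + 1] π = 0 := by
        rw [show m - 1 + 1 = m by omega]; exact hm0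
      rwa [Function.iterate_succ_apply'] at h'
    have hSpos : (1:ℝ) ≤ ∑ j ∈ Finset.range (m - 1 + 1), (i₀:ℝ) ^ j := by
      calc (1:ℝ) = (i₀:ℝ) ^ 0 := by norm_num
      _ ≤ _ := by
          apply Finset.single_le_sum (f := fun j => (i₀:ℝ) ^ j)
          · intro j _; positivity
          · simp
    have hvx0 : 0 ≤ v (f^[m - 1] π) := le_trans (by positivity) hgr
    have hroot := root _ hxne hvx0 hfx
    have hkey : ∑ j ∈ Finset.range m, (i₀:ℝ) ^ j ≤ (e:ℝ) * v (a i₀) := by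
      have hm' : m - 1 + 1 = m := by omega
      rw [← hm']
      have := le_trans hgr hroot
      rw [div_le_iff₀ hepos] at this
      linarith [this]
    have hcond : (if i₀ = 1 then (m : ℝ) ≤ (e : ℝ) * v (a 1)
        else (i₀ : ℝ) ^ m ≤ (e : ℝ) * ((i₀ : ℝ) - 1) * v (a i₀) + 1) := by
      by_cases hi1 : i₀ = 1
      · rw [if_pos hi1]
        rw [hi1] at hkey
        simpa using hkey
      · rw [if_neg hi1]
        have hi2 : 2 ≤ i₀ := by omega
        have hi2' : (2:ℝ) ≤ (i₀:ℝ) := by exact_mod_cast hi2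
        have hne1 : (i₀:ℝ) ≠ 1 := by
          intro hc; rw [hc] at hi2'; linarith
        rw [geom_sum_eq hne1] at hkey
        have hd : (0:ℝ) < (i₀:ℝ) - 1 := by linarith
        rw [div_le_iff₀ hd] at hkey
        nlinarith [hkey]
    exact h m hm1 hcond hm0
end
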